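/- Let α ∈ ℝ with α ≠ 1/2, set μ_α = 2α²/(2α−1) and μ_{1−α} = 2(1−α)²/(1−2α), and let c, k₁, k₂ ∈ ℝ. On the open quadrant Ω = {(x,y) ∈ ℝ² : x > 0, y > 0}, the data q(x,y) = x^α y^{1−α}, A(x) = c x² + k₁ x^{μ_α + 1}, B(y) = −c y² + k₂ y^{μ_{1−α} + 1}, Sˣ(x,y) = μ_α q(x,y)²/x, Sʸ(x,y) = μ_{1−α} q(x,y)²/y, and λ = 0 satisfies the full reduced soliton system: (E1) ∂_y Sˣ + ∂_x Sʸ = 4 q_x q_y; (E2) ∂_x Sˣ = 2 q_x²; (E3) ∂_y Sʸ = 2 q_y²; (E4) A''(x) − (Sˣ/q²) A'(x) = B''(y) − (Sʸ/q²) B'(y) (common value denoted w); (E5) −λ/q² = (1/2) w − (q_x A' + q_xx A + q_y B' + q_yy B)/q + (q_x² A + q_y² B)/q² + (Sˣ q_x A + Sʸ q_y B)/q³. -/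

import Mathlib

open Real Set

/-- Partial derivative in the first variable. -/
noncomputable def px (f : ℝ × ℝ → ℝ) : ℝ × ℝ → ℝ :=
  fun p => deriv (fun t => f (t, p.2)) p.1

/-- Partial derivative in the second variable. -/
noncomputable def py (f : ℝ × ℝ → ℝ) : ℝ × ℝ → ℝ :=
  fun p => deriv (fun t => f (p.1, t)) p.2

lemma deriv_congr_pos' {f g : ℝ → ℝ} {x : ℝ} (hx : 0 < x)
    (h : ∀ t, 0 < t → f t = g t) : deriv f x = deriv g x := by
  apply Filter.EventuallyEq.deriv_eq
  filter_upwards [eventually_gt_nhds hx] with t ht using h t ht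

lemma sq_rpow' {s : ℝ} (hs : 0 ≤ s) (r : ℝ) : (s ^ r) ^ 2 = s ^ (r * 2) := by
  rw [← Real.rpow_natCast (s ^ r) 2, ← Real.rpow_mul hs]
  norm_num

set_option maxHeartbeats 2000000 in
/-- the three-parameter family of singular steady solitons with
`q = x^α y^{1−α}`, `A = c x² + k₁ x^{μ_α+1}`, `B = −c y² + k₂ y^{μ_{1−α}+1}`,
`Sˣ = μ_α q²/x`, `Sʸ = μ_{1−α} q²/y`, `λ = 0` satisfies the full reduced soliton
system on the open quadrant. -/
theorem singular_steady_soliton_family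
    (α c k₁ k₂ : ℝ) (hα : α ≠ 1 / 2)
    (μα μ1α : ℝ)
    (hμα : μα = 2 * α ^ 2 / (2 * α - 1))
    (hμ1α : μ1α = 2 * (1 - α) ^ 2 / (1 - 2 * α))
    (q Sx Sy : ℝ × ℝ → ℝ) (A B : ℝ → ℝ) (lam : ℝ)
    (hq : ∀ p : ℝ × ℝ, 0 < p.1 → 0 < p.2 → q p = p.1 ^ α * p.2 ^ (1 - α))
    (hA : ∀ x : ℝ, 0 < x → A x = c * x ^ 2 + k₁ * x ^ (μα + 1))
    (hB : ∀ y : ℝ, 0 < y → B y = -c * y ^ 2 + k₂ * y ^ (μ1α + 1))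
    (hSx : ∀ p : ℝ × ℝ, 0 < p.1 → 0 < p.2 → Sx p = μα * (q p) ^ 2 / p.1)
    (hSy : ∀ p : ℝ × ℝ, 0 < p.1 → 0 < p.2 → Sy p = μ1α * (q p) ^ 2 / p.2)
    (hlam : lam = 0) :
    ∀ p : ℝ × ℝ, 0 < p.1 → 0 < p.2 →
      (py Sx p + px Sy p = 4 * px q p * py q p) ∧
      (px Sx p = 2 * (px q p) ^ 2) ∧
      (py Sy p = 2 * (py q p) ^ 2) ∧
      (deriv (deriv A) p.1 - Sx p / (q p) ^ 2 * deriv A p.1 =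
        deriv (deriv B) p.2 - Sy p / (q p) ^ 2 * deriv B p.2) ∧
      (-(lam / (q p) ^ 2) =
        (1 / 2) * (deriv (deriv A) p.1 - Sx p / (q p) ^ 2 * deriv A p.1)
        - (px q p * deriv A p.1 + px (px q) p * A p.1
            + py q p * deriv B p.2 + py (py q) p * B p.2) / q p
        + ((px q p) ^ 2 * A p.1 + (py q p) ^ 2 * B p.2) / (q p) ^ 2
        + (Sx p * px q p * A p.1 + Sy p * py q p * B p.2) / (q p) ^ 3) := by
  -- scalar facts
  have hne1 : 2 * α - 1 ≠ 0 := by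
    intro h; apply hα; linarith
  have hne2 : 1 - 2 * α ≠ 0 := by
    intro h; apply hα; linarith
  have hm1 : μα * (2 * α - 1) = 2 * α ^ 2 := by
    rw [hμα]; field_simp
  have hm2 : μ1α * (1 - 2 * α) = 2 * (1 - α) ^ 2 := by
    rw [hμ1α]; field_simp
  have hsum : μα + μ1α = 2 := by
    rw [hμα, hμ1α]
    field_simp
    ring
  have hμsub : μ1α = 2 - μα := by linarith
  intro p hx hy
  obtain ⟨x, y⟩ := p
  dsimp only at hx hy ⊢
  have hx' : x ≠ 0 := hx.ne'
  have hy' : y ≠ 0 := hy.ne'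
  -- normal forms of Sx, Sy
  have hSx' : ∀ a b : ℝ, 0 < a → 0 < b →
      Sx (a, b) = μα * a ^ (α * 2 - 1) * b ^ ((1 - α) * 2) := by
    intro a b ha hb
    rw [hSx _ ha hb, hq _ ha hb, mul_pow, sq_rpow' ha.le, sq_rpow' hb.le,
      Real.rpow_sub ha, Real.rpow_one]
    ring
  have hSy' : ∀ a b : ℝ, 0 < a → 0 < b →
      Sy (a, b) = μ1α * a ^ (α * 2) * b ^ ((1 - α) * 2 - 1) := by
    intro a b ha hb
    rw [hSy _ ha hb, hq _ ha hb, mul_pow, sq_rpow' ha.le, sq_rpow' hb.le,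
      Real.rpow_sub hb, Real.rpow_one]
    ring
  -- first partials of q
  have Dqx : ∀ a b : ℝ, 0 < a → 0 < b →
      px q (a, b) = α * a ^ (α - 1) * b ^ (1 - α) := by
    intro a b ha hb
    have hg : ∀ t : ℝ, 0 < t → q (t, b) = t ^ α * b ^ (1 - α) :=
      fun t ht => hq (t, b) ht hb
    show deriv (fun t => q (t, b)) a = _
    rw [deriv_congr_pos' ha hg]
    exact ((Real.hasDerivAt_rpow_const (Or.inl ha.ne')).mul_const _).deriv
  have Dqy : ∀ a b : ℝ, 0 < a → 0 < b →
      py q (a, b) = a ^ α * ((1 - α) * b ^ (1 - α - 1)) := by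
    intro a b ha hb
    have hg : ∀ t : ℝ, 0 < t → q (a, t) = a ^ α * t ^ (1 - α) :=
      fun t ht => hq (a, t) ha ht
    show deriv (fun t => q (a, t)) b = _
    rw [deriv_congr_pos' hb hg]
    exact ((Real.hasDerivAt_rpow_const (Or.inl hb.ne')).const_mul _).deriv
  -- second partials of q
  have Dqxx : px (px q) (x, y) = α * ((α - 1) * x ^ (α - 1 - 1)) * y ^ (1 - α) := by
    show deriv (fun t => px q (t, y)) x = _
    rw [deriv_congr_pos' hx (fun t ht => Dqx t y ht hy)]
    exact (((Real.hasDerivAt_rpow_const (Or.inl hx')).const_mul α).mul_const _).deriv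
  have Dqyy : py (py q) (x, y) = x ^ α * ((1 - α) * ((1 - α - 1) * y ^ (1 - α - 1 - 1))) := by
    show deriv (fun t => py q (x, t)) y = _
    rw [deriv_congr_pos' hy (fun t ht => Dqy x t hx ht)]
    exact (((Real.hasDerivAt_rpow_const (Or.inl hy')).const_mul (1 - α)).const_mul _).deriv
  -- partials of Sx, Sy
  have DSxy : py Sx (x, y) =
      μα * x ^ (α * 2 - 1) * ((1 - α) * 2 * y ^ ((1 - α) * 2 - 1)) := by
    show deriv (fun t => Sx (x, t)) y = _
    rw [deriv_congr_pos' hy (fun t ht => hSx' x t hx ht)]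
    exact ((Real.hasDerivAt_rpow_const (Or.inl hy')).const_mul _).deriv
  have DSyx : px Sy (x, y) =
      μ1α * (α * 2 * x ^ (α * 2 - 1)) * y ^ ((1 - α) * 2 - 1) := by
    show deriv (fun t => Sy (t, y)) x = _
    rw [deriv_congr_pos' hx (fun t ht => hSy' t y ht hy)]
    exact (((Real.hasDerivAt_rpow_const (Or.inl hx')).const_mul μ1α).mul_const _).deriv
  have DSxx : px Sx (x, y) =
      μα * ((α * 2 - 1) * x ^ (α * 2 - 1 - 1)) * y ^ ((1 - α) * 2) := by
    show deriv (fun t => Sx (t, y)) x = _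
    rw [deriv_congr_pos' hx (fun t ht => hSx' t y ht hy)]
    exact (((Real.hasDerivAt_rpow_const (Or.inl hx')).const_mul μα).mul_const _).deriv
  have DSyy : py Sy (x, y) =
      μ1α * x ^ (α * 2) * (((1 - α) * 2 - 1) * y ^ ((1 - α) * 2 - 1 - 1)) := by
    show deriv (fun t => Sy (x, t)) y = _
    rw [deriv_congr_pos' hy (fun t ht => hSy' x t hx ht)]
    exact ((Real.hasDerivAt_rpow_const (Or.inl hy')).const_mul _).deriv
  -- derivatives of A and B
  have DA : ∀ a : ℝ, 0 < a →
      deriv A a = c * (2 * a) + k₁ * ((μα + 1) * a ^ (μα + 1 - 1)) := by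
    intro a ha
    rw [deriv_congr_pos' ha hA]
    have h1 : HasDerivAt (fun t : ℝ => c * t ^ 2 + k₁ * t ^ (μα + 1))
        (c * (2 * a) + k₁ * ((μα + 1) * a ^ (μα + 1 - 1))) a := by
      have h2 := ((hasDerivAt_pow 2 a).const_mul c).add
        ((Real.hasDerivAt_rpow_const (p := μα + 1) (Or.inl ha.ne')).const_mul k₁)
      refine h2.congr_deriv ?_
      push_cast
      ring
    exact h1.deriv
  have DB : ∀ b : ℝ, 0 < b →
      deriv B b = -c * (2 * b) + k₂ * ((μ1α + 1) * b ^ (μ1α + 1 - 1)) := by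
    intro b hb
    rw [deriv_congr_pos' hb hB]
    have h1 : HasDerivAt (fun t : ℝ => -c * t ^ 2 + k₂ * t ^ (μ1α + 1))
        (-c * (2 * b) + k₂ * ((μ1α + 1) * b ^ (μ1α + 1 - 1))) b := by
      have h2 := ((hasDerivAt_pow 2 b).const_mul (-c)).add
        ((Real.hasDerivAt_rpow_const (p := μ1α + 1) (Or.inl hb.ne')).const_mul k₂)
      refine h2.congr_deriv ?_
      push_cast
      ring
    exact h1.deriv
  have DA2 : deriv (deriv A) x =
      c * 2 + k₁ * ((μα + 1) * ((μα + 1 - 1) * x ^ (μα + 1 - 1 - 1))) := by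
    rw [deriv_congr_pos' hx DA]
    have h1 : HasDerivAt
        (fun t : ℝ => c * (2 * t) + k₁ * ((μα + 1) * t ^ (μα + 1 - 1)))
        (c * 2 + k₁ * ((μα + 1) * ((μα + 1 - 1) * x ^ (μα + 1 - 1 - 1)))) x := by
      have h2 := (((hasDerivAt_id x).const_mul (2 : ℝ)).const_mul c).add
        (((Real.hasDerivAt_rpow_const (p := μα + 1 - 1) (Or.inl hx')).const_mul (μα + 1)).const_mul k₁)
      refine h2.congr_deriv ?_
      ring
    exact h1.deriv
  have DB2 : deriv (deriv B) y =
      -c * 2 + k₂ * ((μ1α + 1) * ((μ1α + 1 - 1) * y ^ (μ1α + 1 - 1 - 1))) := by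
    rw [deriv_congr_pos' hy DB]
    have h1 : HasDerivAt
        (fun t : ℝ => -c * (2 * t) + k₂ * ((μ1α + 1) * t ^ (μ1α + 1 - 1)))
        (-c * 2 + k₂ * ((μ1α + 1) * ((μ1α + 1 - 1) * y ^ (μ1α + 1 - 1 - 1)))) y := by
      have h2 := (((hasDerivAt_id y).const_mul (2 : ℝ)).const_mul (-c)).add
        (((Real.hasDerivAt_rpow_const (p := μ1α + 1 - 1) (Or.inl hy')).const_mul (μ1α + 1)).const_mul k₂)
      refine h2.congr_deriv ?_
      ring
    exact h1.deriv
  -- conversion lemmas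
  have cx1 : x ^ (α - 1) = x ^ α / x := by
    rw [Real.rpow_sub hx, Real.rpow_one]
  have cx2 : x ^ (α - 1 - 1) = x ^ α / x / x := by
    rw [Real.rpow_sub hx (α - 1) 1, Real.rpow_one, cx1]
  have cx3 : x ^ (α * 2 - 1) = (x ^ α) ^ 2 / x := by
    rw [Real.rpow_sub hx, Real.rpow_one, ← sq_rpow' hx.le]
  have cx4 : x ^ (α * 2 - 1 - 1) = (x ^ α) ^ 2 / x / x := by
    rw [Real.rpow_sub hx (α * 2 - 1) 1, Real.rpow_one, cx3]
  have cx5 : x ^ (α * 2) = (x ^ α) ^ 2 := (sq_rpow' hx.le α).symm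
  have cy1 : y ^ (1 - α - 1) = y ^ (1 - α) / y := by
    rw [Real.rpow_sub hy, Real.rpow_one]
  have cy2 : y ^ (1 - α - 1 - 1) = y ^ (1 - α) / y / y := by
    rw [Real.rpow_sub hy (1 - α - 1) 1, Real.rpow_one, cy1]
  have cy3 : y ^ ((1 - α) * 2 - 1) = (y ^ (1 - α)) ^ 2 / y := by
    rw [Real.rpow_sub hy, Real.rpow_one, ← sq_rpow' hy.le]
  have cy4 : y ^ ((1 - α) * 2 - 1 - 1) = (y ^ (1 - α)) ^ 2 / y / y := by
    rw [Real.rpow_sub hy ((1 - α) * 2 - 1) 1, Real.rpow_one, cy3]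
  have cy5 : y ^ ((1 - α) * 2) = (y ^ (1 - α)) ^ 2 := (sq_rpow' hy.le (1 - α)).symm
  have cA1 : x ^ (μα + 1) = x ^ μα * x := Real.rpow_add_one hx' μα
  have cA2 : x ^ (μα + 1 - 1) = x ^ μα := by
    rw [show μα + 1 - 1 = μα by ring]
  have cA3 : x ^ (μα + 1 - 1 - 1) = x ^ μα / x := by
    rw [show μα + 1 - 1 - 1 = μα - 1 by ring, Real.rpow_sub hx, Real.rpow_one]
  have cB1 : y ^ (μ1α + 1) = y ^ μ1α * y := Real.rpow_add_one hy' μ1α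
  have cB2 : y ^ (μ1α + 1 - 1) = y ^ μ1α := by
    rw [show μ1α + 1 - 1 = μ1α by ring]
  have cB3 : y ^ (μ1α + 1 - 1 - 1) = y ^ μ1α / y := by
    rw [show μ1α + 1 - 1 - 1 = μ1α - 1 by ring, Real.rpow_sub hy, Real.rpow_one]
  -- positivity of atoms
  have hPX : (0 : ℝ) < x ^ α := Real.rpow_pos_of_pos hx α
  have hPY : (0 : ℝ) < y ^ (1 - α) := Real.rpow_pos_of_pos hy (1 - α)
  have hqxy : q (x, y) = x ^ α * y ^ (1 - α) := hq _ hx hy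
  have hqpos : 0 < q (x, y) := by rw [hqxy]; positivity
  refine ⟨?_, ?_, ?_, ?_, ?_⟩
  · -- E1
    rw [DSxy, DSyx, Dqx x y hx hy, Dqy x y hx hy, cx1, cy1, cx3, cy3,
      hμα, hμ1α]
    field_simp
    ring
  · -- E2
    rw [DSxx, Dqx x y hx hy, cx1, cx4, cy5, hμα]
    field_simp
  · -- E3
    rw [DSyy, Dqy x y hx hy, cy1, cy4, cx5, hμ1α]
    field_simp
    ring
  · -- E4
    rw [DA2, DB2, DA x hx, DB y hy, hSx _ hx hy, hSy _ hx hy,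
      cA2, cA3, cB2, cB3, hμsub]
    field_simp
    ring
  · -- E5
    rw [hlam, DA2, DA x hx, DB y hy, hSx _ hx hy, hSy _ hx hy,
      hA x hx, hB y hy, Dqx x y hx hy, Dqy x y hx hy, Dqxx, Dqyy,
      hqxy, cA1, cA2, cA3, cB1, cB2, cx1, cx2, cy1, cy2, hμsub]
    field_simp
    ring
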